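/- Equilibrium invariance of the arboreal distribution: if G is a finite strongly connected reversible graph satisfying the cycle condition, then for all vertices i, j and every T ∈ Θ_i, Pr_{Θ_j}(Φ_{i,j}(T)) = Pr_{Θ_i}(T), where Pr_{Θ_k}(T) = q(T)/∑_{T'∈Θ_k} q(T') and Φ_{i,j} is the tree-reversal bijection. -/

import Mathlib

open Finset

attribute [local instance] Classical.propDecidable

/-- `i → j` is an edge of the graph when its label is positive. -/
def IsEdge {n : ℕ} (ℓ : Fin n → Fin n → ℝ) (i j : Fin n) : Prop := 0 < ℓ i j

/-- Strong connectivity: any two vertices are joined by a directed path of edges. -/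
def StronglyConnected {n : ℕ} (ℓ : Fin n → Fin n → ℝ) : Prop :=
  ∀ i j : Fin n, Relation.ReflTransGen (IsEdge ℓ) i j

/-- Reversibility: `i → j` is an edge iff `j → i` is. -/
def Reversible {n : ℕ} (ℓ : Fin n → Fin n → ℝ) : Prop :=
  ∀ i j : Fin n, 0 < ℓ i j ↔ 0 < ℓ j i

/-- The Laplacian matrix: `L j i = ℓ i j` off the diagonal,
`L i i = -∑_{k ≠ i} ℓ i k`. -/
noncomputable def graphLaplacian {n : ℕ} (ℓ : Fin n → Fin n → ℝ) :
    Matrix (Fin n) (Fin n) ℝ :=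
  fun j i => if j = i then -∑ k ∈ univ.filter (· ≠ i), ℓ i k else ℓ i j

/-- A spanning tree rooted at `r`, encoded as a parent map `t`: the root is fixed,
every other vertex has a positively-labelled edge to its parent, and iterating
the parent map from any vertex reaches the root. -/
def IsSpanningTree {n : ℕ} (ℓ : Fin n → Fin n → ℝ) (r : Fin n)
    (t : Fin n → Fin n) : Prop :=
  t r = r ∧ (∀ v, v ≠ r → 0 < ℓ v (t v)) ∧ ∀ v, ∃ k, t^[k] v = r

/-- `Θ_r`: the set of spanning trees rooted at `r`. -/
noncomputable def Trees {n : ℕ} (ℓ : Fin n → Fin n → ℝ) (r : Fin n) :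
    Finset (Fin n → Fin n) :=
  univ.filter (IsSpanningTree ℓ r)

/-- `q(T)`: the product of the edge labels over the edges of the tree. -/
noncomputable def treeWeight {n : ℕ} (ℓ : Fin n → Fin n → ℝ) (r : Fin n)
    (t : Fin n → Fin n) : ℝ :=
  ∏ v ∈ univ.filter (· ≠ r), ℓ v (t v)

/-- A directed path from `i` to `j`, as the list of visited vertices. -/
def IsPathFrom {n : ℕ} (ℓ : Fin n → Fin n → ℝ) (i j : Fin n)
    (p : List (Fin n)) : Prop :=
  p.Chain' (IsEdge ℓ) ∧ p.head? = some i ∧ p.getLast? = some j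

/-- A minimal (self-avoiding) path from `i` to `j`: all vertices distinct. -/
def IsMinPathFrom {n : ℕ} (ℓ : Fin n → Fin n → ℝ) (i j : Fin n)
    (p : List (Fin n)) : Prop :=
  IsPathFrom ℓ i j p ∧ p.Nodup

/-- `S(P)`: the action / entropy change of a path, the sum of
`log (ℓ(a→b)/ℓ(b→a))` over its consecutive pairs `a → b`. -/
noncomputable def pathAction {n : ℕ} (ℓ : Fin n → Fin n → ℝ)
    (p : List (Fin n)) : ℝ :=
  ((p.zip p.tail).map (fun e => Real.log (ℓ e.1 e.2 / ℓ e.2 e.1))).sum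

/-- `q(P)`: the product of the labels over the edges of a path. -/
noncomputable def pathWeight {n : ℕ} (ℓ : Fin n → Fin n → ℝ)
    (p : List (Fin n)) : ℝ :=
  ((p.zip p.tail).map (fun e => ℓ e.1 e.2)).prod

/-- The path from `i` to the root `r` along the parent map `t` (fuel `k`). -/
def treePathAux {n : ℕ} (t : Fin n → Fin n) (r : Fin n) :
    ℕ → Fin n → List (Fin n)
  | 0, i => [i]
  | k + 1, i => if i = r then [i] else i :: treePathAux t r k (t i)

/-- `T_i`: the unique path from `i` to the root `r` on the spanning tree `t`. -/
def treePath {n : ℕ} (t : Fin n → Fin n) (r : Fin n) (i : Fin n) :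
    List (Fin n) :=
  treePathAux t r n i

/-- The cycle condition: `S(C) = 0` for every directed cycle `C`
(a directed path whose first and last vertices agree). -/
def CycleCondition {n : ℕ} (ℓ : Fin n → Fin n → ℝ) : Prop :=
  ∀ p : List (Fin n), p.Chain' (IsEdge ℓ) → p.head? = p.getLast? →
    pathAction ℓ p = 0

/-- The tree-reversal map `Φ_{r,j}`: given a tree `t` rooted at `r`, reverse the
edges on the unique tree path from `j` to `r`, obtaining a tree rooted at `j`. -/
def reverseTree {n : ℕ} (t : Fin n → Fin n) (r j : Fin n) : Fin n → Fin n :=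
  fun v =>
    (((treePath t r j).zip (treePath t r j).tail).find? (fun e => e.2 == v)).elim
      (if v = j then j else t v) (fun e => e.1)

/-! ### Auxiliary lemmas -/

lemma zt_range {α : Type*} (m : ℕ) (f : ℕ → α) :
    ((List.range (m+1)).map f).zip (((List.range (m+1)).map f).tail) =
      (List.range m).map fun k => (f k, f (k+1)) := by
  induction m generalizing f with
  | zero => simp [List.range_succ]
  | succ m ih =>
    have h1 : (List.range (m+2)).map f = f 0 :: (List.range (m+1)).map (f ∘ Nat.succ) := by
      rw [List.range_succ_eq_map]; simp
    have h2 : (List.range (m+1)).map (f ∘ Nat.succ) =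
        f 1 :: (List.range m).map (f ∘ Nat.succ ∘ Nat.succ) := by
      rw [List.range_succ_eq_map]; simp [Function.comp]
    have ih' := ih (f ∘ Nat.succ)
    rw [h2, List.tail_cons] at ih'
    rw [h1, h2, List.tail_cons, List.zip_cons_cons, ih']
    rw [List.range_succ_eq_map (n := m)]
    simp [Function.comp]

lemma treePathAux_eq {n : ℕ} (t : Fin n → Fin n) (r : Fin n) :
    ∀ (d fuel : ℕ) (v : Fin n), t^[d] v = r → (∀ k, k < d → t^[k] v ≠ r) →
      d ≤ fuel →
      treePathAux t r fuel v = (List.range (d+1)).map (fun k => t^[k] v) := by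
  intro d
  induction d with
  | zero =>
    intro fuel v hd _ _
    simp only [Function.iterate_zero, id_eq] at hd
    subst hd
    cases fuel <;> simp [treePathAux, List.range_succ]
  | succ d ih =>
    intro fuel v hd hmin hfl
    have hvr : v ≠ r := by simpa using hmin 0 (Nat.succ_pos d)
    obtain ⟨fl, rfl⟩ : ∃ fl, fuel = fl + 1 := ⟨fuel - 1, by omega⟩
    rw [treePathAux, if_neg hvr]
    rw [ih fl (t v) (by rw [← Function.iterate_succ_apply]; exact hd)
      (fun k hk => by rw [← Function.iterate_succ_apply]; exact hmin (k+1) (by omega))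
      (by omega)]
    rw [List.range_succ_eq_map (n := d+1), List.map_cons, List.map_map]
    simp only [Function.iterate_zero, id_eq]
    refine congrArg (v :: ·) ?_
    exact List.map_congr_left (fun a _ => by
      simp [Function.comp, Function.iterate_succ_apply])

lemma find?_range_eq_some {q : ℕ → Bool} {m s : ℕ} (hs : s < m) (h1 : q s = true)
    (h2 : ∀ k, k < s → q k = false) : (List.range m).find? q = some s := by
  induction m with
  | zero => omega
  | succ m ih =>
    rw [List.range_succ, List.find?_append]
    rcases Nat.lt_or_ge s m with h | h
    · rw [ih h]; rfl
    · have hsm : s = m := by omega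
      subst hsm
      have : (List.range s).find? q = none := by
        rw [List.find?_eq_none]
        intro x hx
        simp only [List.mem_range] at hx
        simp [h2 x hx]
      rw [this]
      simp [List.find?, h1]

lemma find?_range_eq_none {q : ℕ → Bool} {m : ℕ} (h2 : ∀ k, k < m → q k = false) :
    (List.range m).find? q = none := by
  rw [List.find?_eq_none]
  intro x hx
  simp only [List.mem_range] at hx
  simp [h2 x hx]

section TreeLemmas

variable {n : ℕ} {ℓ : Fin n → Fin n → ℝ} {t : Fin n → Fin n} {r : Fin n}

lemma iter_find_ne {v : Fin n} (h : ∃ k, t^[k] v = r) {a b : ℕ} (hab : a < b)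
    (hb : b ≤ Nat.find h) : t^[a] v ≠ t^[b] v := by
  intro hee
  have hd : t^[Nat.find h] v = r := Nat.find_spec h
  have : t^[Nat.find h - b + a] v = r := by
    have : t^[Nat.find h - b + b] v = r := by rwa [Nat.sub_add_cancel hb]
    rw [Function.iterate_add_apply] at this ⊢
    rwa [← hee] at this
  exact Nat.find_min h (by omega) this

lemma nodup_treeList {v : Fin n} (h : ∃ k, t^[k] v = r) :
    ((List.range (Nat.find h + 1)).map (fun k => t^[k] v)).Nodup := by
  refine List.Nodup.map_on ?_ List.nodup_range
  intro a ha b hb hab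
  simp only [List.mem_range] at ha hb
  by_contra hne
  rcases Nat.lt_or_ge a b with hl | hl
  · exact iter_find_ne h hl (by omega) hab
  · exact iter_find_ne h (by omega) (by omega) hab.symm

lemma find_le_card {v : Fin n} (h : ∃ k, t^[k] v = r) : Nat.find h + 1 ≤ n := by
  have := (nodup_treeList h).length_le_card
  simpa using this

lemma treePath_eq {v : Fin n} (h : ∃ k, t^[k] v = r) :
    treePath t r v = (List.range (Nat.find h + 1)).map (fun k => t^[k] v) := by
  refine treePathAux_eq t r (Nat.find h) n v (Nat.find_spec h)
    (fun k hk => Nat.find_min h hk) ?_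
  have := find_le_card h
  omega

lemma zt_treePath {j : Fin n} (hj : ∃ k, t^[k] j = r) :
    (treePath t r j).zip (treePath t r j).tail =
      (List.range (Nat.find hj)).map (fun k => (t^[k] j, t^[k+1] j)) := by
  rw [treePath_eq hj, zt_range]

lemma reverseTree_on {j : Fin n} (hj : ∃ k, t^[k] j = r) {s : ℕ}
    (hs : s < Nat.find hj) : reverseTree t r j (t^[s+1] j) = t^[s] j := by
  unfold reverseTree
  rw [zt_treePath hj, List.find?_map]
  rw [find?_range_eq_some (q := fun k =>
      ((fun e : Fin n × Fin n => e.2 == t^[s+1] j) ∘ fun k => (t^[k] j, t^[k+1] j)) k)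
      hs (by simp) ?_]
  · rfl
  · intro k hk
    simp only [Function.comp_apply, beq_eq_false_iff_ne, ne_eq]
    exact iter_find_ne hj (by omega) (by omega)

lemma reverseTree_root {j : Fin n} (hj : ∃ k, t^[k] j = r) :
    reverseTree t r j j = j := by
  unfold reverseTree
  rw [zt_treePath hj, List.find?_map]
  rw [find?_range_eq_none ?_]
  · simp
  · intro k hk
    simp only [Function.comp_apply, beq_eq_false_iff_ne, ne_eq]
    exact fun hc => iter_find_ne hj (Nat.succ_pos k) (by omega) hc.symm

lemma reverseTree_off {j : Fin n} (hj : ∃ k, t^[k] j = r) {v : Fin n}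
    (hv : ∀ k, k ≤ Nat.find hj → t^[k] j ≠ v) : reverseTree t r j v = t v := by
  unfold reverseTree
  rw [zt_treePath hj, List.find?_map]
  rw [find?_range_eq_none ?_]
  · have : v ≠ j := fun hc => hv 0 (Nat.zero_le _) (by simp [hc])
    simp [this]
  · intro k hk
    simp only [Function.comp_apply, beq_eq_false_iff_ne, ne_eq]
    exact hv (k+1) (by omega)

end TreeLemmas

section TreeLemmas2

variable {n : ℕ} {ℓ : Fin n → Fin n → ℝ} {t : Fin n → Fin n} {r : Fin n}

lemma p_ne_root {j : Fin n} (hj : ∃ k, t^[k] j = r) {s : ℕ} (hs : s < Nat.find hj) :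
    t^[s] j ≠ r := Nat.find_min hj hs

lemma t_iter_succ {j : Fin n} (s : ℕ) : t (t^[s] j) = t^[s+1] j :=
  (Function.iterate_succ_apply' t s j).symm

lemma reverseTree_isSpanningTree (ht : IsSpanningTree ℓ r t) (hrev : Reversible ℓ)
    (j : Fin n) : IsSpanningTree ℓ j (reverseTree t r j) := by
  have hj : ∃ k, t^[k] j = r := ht.2.2 j
  set m := Nat.find hj with hm
  refine ⟨reverseTree_root hj, ?_, ?_⟩
  · intro v hvj
    by_cases hon : ∃ k, k ≤ m ∧ t^[k] j = v
    · obtain ⟨k, hk, hpv⟩ := hon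
      have hk0 : k ≠ 0 := by
        rintro rfl
        exact hvj (by simpa using hpv.symm)
      obtain ⟨s, rfl⟩ : ∃ s, k = s + 1 := ⟨k - 1, by omega⟩
      have hs : s < m := by omega
      rw [← hpv, reverseTree_on hj hs]
      have := ht.2.1 (t^[s] j) (p_ne_root hj hs)
      rw [Function.iterate_succ_apply']
      exact (hrev _ _).1 this
    · push_neg at hon
      rw [reverseTree_off hj (fun k hk => hon k hk)]
      refine ht.2.1 v (fun hc => ?_)
      exact hon m le_rfl ((Nat.find_spec hj).trans hc.symm)
  · have hpath : ∀ s, s ≤ m → (reverseTree t r j)^[s] (t^[s] j) = j := by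
      intro s
      induction s with
      | zero => simp
      | succ s ihs =>
        intro hs
        rw [Function.iterate_succ_apply, reverseTree_on hj (by omega)]
        exact ihs (by omega)
    intro v
    obtain ⟨N, hN⟩ : ∃ N, Nat.find (ht.2.2 v) = N := ⟨_, rfl⟩
    induction N using Nat.strong_induction_on generalizing v with
    | _ N ihN =>
      by_cases hon : ∃ k, k ≤ m ∧ t^[k] j = v
      · obtain ⟨k, hk, hpv⟩ := hon
        exact ⟨k, by rw [← hpv]; exact hpath k hk⟩
      · push_neg at hon
        have hvr : v ≠ r := by
          intro hc
          exact hon m le_rfl (by rw [hc]; exact Nat.find_spec hj)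
        have hN1 : N ≠ 0 := by
          intro hc
          apply hvr
          have := Nat.find_spec (ht.2.2 v)
          rw [hN, hc] at this
          simpa using this
        have htv : ∃ k, t^[k] (t v) = r := ht.2.2 (t v)
        have hlt : Nat.find (ht.2.2 (t v)) < N := by
          have hw : t^[N-1] (t v) = r := by
            have h2 := Nat.find_spec (ht.2.2 v)
            rw [hN] at h2
            calc t^[N-1] (t v) = t^[N-1+1] v := by rw [Function.iterate_succ_apply]
              _ = r := by rw [show N-1+1 = N by omega]; exact h2
          exact lt_of_le_of_lt (Nat.find_le hw) (by omega)
        obtain ⟨k, hk⟩ := ihN _ hlt (t v) rfl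
        refine ⟨k + 1, ?_⟩
        rw [Function.iterate_succ_apply, reverseTree_off hj (fun k hk => hon k hk)]
        exact hk

lemma reverseTree_iter (ht : IsSpanningTree ℓ r t) (j : Fin n) :
    ∀ k, k ≤ Nat.find (ht.2.2 j) → (reverseTree t r j)^[k] r = t^[Nat.find (ht.2.2 j) - k] j := by
  have hj := ht.2.2 j
  intro k
  induction k with
  | zero => simpa using (Nat.find_spec hj).symm
  | succ k ihk =>
    intro hk
    rw [Function.iterate_succ_apply', ihk (by omega)]
    have h1 : Nat.find hj - k = (Nat.find hj - (k+1)) + 1 := by omega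
    rw [h1, reverseTree_on hj (by omega)]

lemma reverseTree_find (ht : IsSpanningTree ℓ r t) (j : Fin n)
    (h' : ∃ k, (reverseTree t r j)^[k] r = j) :
    Nat.find h' = Nat.find (ht.2.2 j) := by
  have hj := ht.2.2 j
  refine le_antisymm (Nat.find_le ?_) ?_
  · rw [reverseTree_iter ht j _ le_rfl]
    simp
  · rw [Nat.le_find_iff]
    intro k hk hc
    rw [reverseTree_iter ht j k (by omega)] at hc
    exact iter_find_ne hj (Nat.pos_of_ne_zero (by omega) : 0 < Nat.find hj - k)
      (by omega) (by simpa using hc.symm)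

lemma reverseTree_involution (ht : IsSpanningTree ℓ r t) (hrev : Reversible ℓ)
    (j : Fin n) : reverseTree (reverseTree t r j) j r = t := by
  have hj := ht.2.2 j
  set m := Nat.find hj with hm
  set t' := reverseTree t r j with ht'def
  have ht' : IsSpanningTree ℓ j t' := reverseTree_isSpanningTree ht hrev j
  have h' : ∃ k, t'^[k] r = j := ht'.2.2 r
  have hm' : Nat.find h' = m := reverseTree_find ht j h'
  funext v
  by_cases hon : ∃ k, k ≤ m ∧ t^[k] j = v
  · obtain ⟨k, hk, hpv⟩ := hon
    rcases Nat.lt_or_ge k m with hkm | hkm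
    · have hs : m - k - 1 < Nat.find h' := by omega
      have e1 : t'^[(m - k - 1) + 1] r = v := by
        rw [reverseTree_iter ht j _ (by omega), show m - (m - k - 1 + 1) = k by omega, hpv]
      have e2 : t'^[m - k - 1] r = t v := by
        rw [reverseTree_iter ht j _ (by omega), show m - (m - k - 1) = k + 1 by omega,
          ← hpv]
        exact Function.iterate_succ_apply' t k j
      have h3 := reverseTree_on h' hs
      rw [e1, e2] at h3
      exact h3
    · have hkme : k = m := by omega
      have hvr : v = r := by rw [← hpv, hkme]; exact Nat.find_spec hj
      rw [hvr, reverseTree_root h', ht.1]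
  · push_neg at hon
    have hoff' : ∀ k, k ≤ Nat.find h' → t'^[k] r ≠ v := by
      intro k hk
      rw [reverseTree_iter ht j k (by omega)]
      exact hon _ (by omega)
    rw [reverseTree_off h' hoff']
    exact reverseTree_off hj (fun k hk => hon k hk)

end TreeLemmas2

section WeightLemmas

variable {n : ℕ} {ℓ : Fin n → Fin n → ℝ} {t : Fin n → Fin n} {r : Fin n}

lemma pathAction_treePath {j : Fin n} (hj : ∃ k, t^[k] j = r) :
    pathAction ℓ (treePath t r j) =
      ∑ k ∈ Finset.range (Nat.find hj),
        Real.log (ℓ (t^[k] j) (t^[k+1] j) / ℓ (t^[k+1] j) (t^[k] j)) := by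
  unfold pathAction
  rw [zt_treePath hj, List.map_map]
  rfl

lemma treeWeight_reverseTree (ht : IsSpanningTree ℓ r t) (hrev : Reversible ℓ)
    (j : Fin n) :
    treeWeight ℓ j (reverseTree t r j) =
      Real.exp (- pathAction ℓ (treePath t r j)) * treeWeight ℓ r t := by
  have hj := ht.2.2 j
  set m := Nat.find hj with hm
  set p : ℕ → Fin n := fun k => t^[k] j with hp
  have hinj : ∀ a b, a ≤ m → b ≤ m → p a = p b → a = b := by
    intro a b ha hb hab
    by_contra hne
    rcases Nat.lt_or_ge a b with hl | hl
    · exact iter_find_ne hj hl hb hab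
    · exact iter_find_ne hj (by omega) ha hab.symm
  have hstep : ∀ k : ℕ, t (p k) = p (k+1) := fun k =>
    (Function.iterate_succ_apply' t k j).symm
  have hedge : ∀ k, k < m → 0 < ℓ (p k) (p (k+1)) := by
    intro k hk
    have := ht.2.1 (p k) (p_ne_root hj hk)
    rwa [hstep k] at this
  have hedge' : ∀ k, k < m → 0 < ℓ (p (k+1)) (p k) := fun k hk =>
    (hrev _ _).1 (hedge k hk)
  set B : Finset (Fin n) := univ \ ((Finset.range (m + 1)).image p) with hB
  have hmemB : ∀ v, v ∈ B ↔ ∀ k, k ≤ m → p k ≠ v := by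
    intro v
    simp only [hB, Finset.mem_sdiff, Finset.mem_univ, true_and, Finset.mem_image,
      Finset.mem_range, not_exists, not_and]
    constructor
    · intro h k hk; exact h k (by omega)
    · intro h k hk; exact h k (by omega)
  have hd1 : Disjoint ((Finset.range m).image p) B := by
    rw [Finset.disjoint_left]
    intro v hv hvB
    obtain ⟨k, hk, hpv⟩ := Finset.mem_image.1 hv
    exact (hmemB v).1 hvB k (by simp at hk; omega) hpv
  have hd2 : Disjoint ((Finset.range m).image (fun k => p (k+1))) B := by
    rw [Finset.disjoint_left]
    intro v hv hvB
    obtain ⟨k, hk, hpv⟩ := Finset.mem_image.1 hv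
    exact (hmemB v).1 hvB (k+1) (by simp at hk; omega) hpv
  have hsplit1 : (univ : Finset (Fin n)).filter (· ≠ r) = ((Finset.range m).image p) ∪ B := by
    ext v
    simp only [Finset.mem_filter, Finset.mem_univ, true_and, Finset.mem_union,
      Finset.mem_image, Finset.mem_range]
    constructor
    · intro hv
      by_cases hon : ∃ k, k ≤ m ∧ p k = v
      · obtain ⟨k, hk, hpv⟩ := hon
        have : k ≠ m := by
          rintro rfl
          exact hv (by rw [← hpv]; exact Nat.find_spec hj)
        exact Or.inl ⟨k, by omega, hpv⟩
      · push_neg at hon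
        exact Or.inr ((hmemB v).2 hon)
    · rintro (⟨k, hk, hpv⟩ | hvB)
      · rw [← hpv]; exact p_ne_root hj hk
      · intro hc
        exact (hmemB v).1 hvB m le_rfl ((Nat.find_spec hj).trans hc.symm)
  have hsplit2 : (univ : Finset (Fin n)).filter (· ≠ j) =
      ((Finset.range m).image (fun k => p (k+1))) ∪ B := by
    ext v
    simp only [Finset.mem_filter, Finset.mem_univ, true_and, Finset.mem_union,
      Finset.mem_image, Finset.mem_range]
    constructor
    · intro hv
      by_cases hon : ∃ k, k ≤ m ∧ p k = v
      · obtain ⟨k, hk, hpv⟩ := hon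
        have : k ≠ 0 := by
          rintro rfl
          exact hv hpv.symm
        exact Or.inl ⟨k - 1, by omega, by rw [show k - 1 + 1 = k by omega]; exact hpv⟩
      · push_neg at hon
        exact Or.inr ((hmemB v).2 hon)
    · rintro (⟨k, hk, hpv⟩ | hvB)
      · rw [← hpv]
        intro hc
        exact absurd (hinj (k+1) 0 (by omega) (by omega) (by simpa [hp] using hc)) (by omega)
      · intro hc
        exact (hmemB v).1 hvB 0 (by omega) hc.symm
  have hinjOn1 : Set.InjOn p (Finset.range m) := by
    intro a ha b hb hab
    simp only [Finset.coe_sort_coe, Finset.mem_coe, Finset.mem_range] at ha hb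
    exact hinj a b (by omega) (by omega) hab
  have hinjOn2 : Set.InjOn (fun k => p (k+1)) (Finset.range m) := by
    intro a ha b hb hab
    simp only [Finset.coe_sort_coe, Finset.mem_coe, Finset.mem_range] at ha hb
    have := hinj (a+1) (b+1) (by omega) (by omega) hab
    omega
  have hW : treeWeight ℓ r t =
      (∏ k ∈ Finset.range m, ℓ (p k) (p (k+1))) * ∏ v ∈ B, ℓ v (t v) := by
    unfold treeWeight
    rw [hsplit1, Finset.prod_union hd1, Finset.prod_image hinjOn1]
    congr 1
    refine Finset.prod_congr rfl (fun k _ => ?_)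
    rw [hstep k]
  have hW' : treeWeight ℓ j (reverseTree t r j) =
      (∏ k ∈ Finset.range m, ℓ (p (k+1)) (p k)) * ∏ v ∈ B, ℓ v (t v) := by
    unfold treeWeight
    rw [hsplit2, Finset.prod_union hd2, Finset.prod_image hinjOn2]
    congr 1
    · refine Finset.prod_congr rfl (fun k hk => ?_)
      rw [reverseTree_on hj (by simp at hk; omega)]
    · refine Finset.prod_congr rfl (fun v hv => ?_)
      rw [reverseTree_off hj ((hmemB v).1 hv)]
  rw [hW, hW', pathAction_treePath hj]
  rw [← Finset.sum_neg_distrib, Real.exp_sum, ← mul_assoc, ← Finset.prod_mul_distrib]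
  congr 1
  refine Finset.prod_congr rfl (fun k hk => ?_)
  simp only [Finset.mem_range] at hk
  rw [Real.exp_neg, Real.exp_log (div_pos (hedge k hk) (hedge' k hk))]
  have hx := (hedge k hk).ne'
  have hy := (hedge' k hk).ne'
  field_simp

end WeightLemmas

section ActionLemmas

variable {n : ℕ} {ℓ : Fin n → Fin n → ℝ} {r : Fin n}

lemma edge_pos {t : Fin n → Fin n} (ht : IsSpanningTree ℓ r t) {j : Fin n} {k : ℕ}
    (hk : k < Nat.find (ht.2.2 j)) : 0 < ℓ (t^[k] j) (t^[k+1] j) := by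
  have h := ht.2.1 (t^[k] j) (p_ne_root (ht.2.2 j) hk)
  rwa [Function.iterate_succ_apply']

lemma pathAction_range (N : ℕ) (f : ℕ → Fin n) :
    pathAction ℓ ((List.range (N+1)).map f) =
      ∑ k ∈ Finset.range N, Real.log (ℓ (f k) (f (k+1)) / ℓ (f (k+1)) (f k)) := by
  unfold pathAction
  rw [zt_range, List.map_map]
  rfl

lemma pathAction_invariance {t1 t2 : Fin n → Fin n} (ht1 : IsSpanningTree ℓ r t1)
    (ht2 : IsSpanningTree ℓ r t2) (hrev : Reversible ℓ) (hcc : CycleCondition ℓ)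
    (j : Fin n) :
    pathAction ℓ (treePath t1 r j) = pathAction ℓ (treePath t2 r j) := by
  have hj1 := ht1.2.2 j
  have hj2 := ht2.2.2 j
  set m := Nat.find hj1 with hm
  set m' := Nat.find hj2 with hm'
  set p : ℕ → Fin n := fun k => t1^[k] j with hp
  set q : ℕ → Fin n := fun k => t2^[k] j with hq
  set f : ℕ → Fin n := fun k => if k ≤ m then p k else q (m + m' - k) with hf
  have hfp : ∀ k, k ≤ m → f k = p k := fun k hk => if_pos hk
  have hfq : ∀ k, k ≤ m' → f (m + k) = q (m' - k) := by
    intro k hk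
    rcases Nat.eq_zero_or_pos k with rfl | hk0
    · rw [show m + 0 = m by omega, hfp m le_rfl, Nat.sub_zero]
      show t1^[m] j = t2^[m'] j
      rw [Nat.find_spec hj1, Nat.find_spec hj2]
    · rw [hf]
      simp only
      rw [if_neg (by omega), show m + m' - (m + k) = m' - k by omega]
  have hchain : List.Chain' (IsEdge ℓ) ((List.range (m + m' + 1)).map f) := by
    show List.IsChain _ _
    rw [List.isChain_map]
    rw [show m + m' + 1 = (m + m').succ from rfl, List.isChain_range_succ]
    intro k hk
    simp only [Nat.succ_eq_add_one]
    rcases Nat.lt_or_ge k m with hkm | hkm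
    · rw [hfp k (by omega), hfp (k+1) (by omega)]
      exact edge_pos ht1 hkm
    · obtain ⟨s, rfl⟩ : ∃ s, k = m + s := ⟨k - m, by omega⟩
      have hs : s < m' := by omega
      rw [hfq s (by omega), show m + s + 1 = m + (s + 1) by omega, hfq (s+1) (by omega)]
      have hu : m' - s = (m' - (s+1)) + 1 := by omega
      rw [hu]
      exact (hrev _ _).1 (edge_pos ht2 (by omega))
  have hhead : ((List.range (m + m' + 1)).map f).head? = some j := by
    rw [List.range_succ_eq_map]
    simp only [List.map_cons, List.head?_cons]
    rw [hfp 0 (by omega)]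
    rfl
  have hlast : ((List.range (m + m' + 1)).map f).getLast? = some j := by
    rw [List.range_succ, List.map_append]
    simp only [List.map_cons, List.map_nil]
    rw [List.getLast?_concat, hfq m' le_rfl]
    simp [hq]
  have hzero := hcc _ hchain (by rw [hhead, hlast])
  rw [pathAction_range] at hzero
  rw [Finset.sum_range_add] at hzero
  have hS1 : ∑ k ∈ Finset.range m,
      Real.log (ℓ (f k) (f (k+1)) / ℓ (f (k+1)) (f k)) =
      pathAction ℓ (treePath t1 r j) := by
    rw [pathAction_treePath hj1]
    refine Finset.sum_congr rfl (fun k hk => ?_)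
    simp only [Finset.mem_range] at hk
    rw [hfp k (by omega), hfp (k+1) (by omega)]
  have hS2 : ∑ k ∈ Finset.range m',
      Real.log (ℓ (f (m+k)) (f (m+k+1)) / ℓ (f (m+k+1)) (f (m+k))) =
      - pathAction ℓ (treePath t2 r j) := by
    rw [pathAction_treePath hj2, ← Finset.sum_neg_distrib,
      ← Finset.sum_range_reflect (fun k =>
        -Real.log (ℓ (t2^[k] j) (t2^[k+1] j) / ℓ (t2^[k+1] j) (t2^[k] j))) m']
    refine Finset.sum_congr rfl (fun k hk => ?_)
    simp only [Finset.mem_range] at hk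
    rw [show m + k + 1 = m + (k+1) by omega, hfq k (by omega), hfq (k+1) (by omega)]
    have hu : m' - k = (m' - 1 - k) + 1 := by omega
    have hu2 : m' - (k+1) = m' - 1 - k := by omega
    rw [hu, hu2]
    simp only [hq]
    have hx := edge_pos ht2 (show m' - 1 - k < m' by omega)
    have hy := (hrev _ _).1 hx
    rw [Real.log_div hy.ne' hx.ne', Real.log_div hx.ne' hy.ne']
    ring
  rw [hS1, hS2] at hzero
  linarith

end ActionLemmas

/-- Equilibrium invariance of the arboreal distribution: under the cycle
condition, `Pr_{Θ_j}(Φ_{i,j}(T)) = Pr_{Θ_i}(T)` for every tree `T ∈ Θ_i`. -/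
theorem arboreal_invariance {n : ℕ} (ℓ : Fin n → Fin n → ℝ)
    (hℓ : ∀ i j, 0 ≤ ℓ i j) (hsc : StronglyConnected ℓ) (hrev : Reversible ℓ)
    (hcc : CycleCondition ℓ) (i j : Fin n) (T : Fin n → Fin n)
    (hT : T ∈ Trees ℓ i) :
    treeWeight ℓ j (reverseTree T i j) / (∑ T' ∈ Trees ℓ j, treeWeight ℓ j T') =
      treeWeight ℓ i T / (∑ T' ∈ Trees ℓ i, treeWeight ℓ i T') := by
  rw [Trees, Finset.mem_filter] at hT
  have hTt : IsSpanningTree ℓ i T := hT.2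
  set c := Real.exp (- pathAction ℓ (treePath T i j)) with hc
  have hc0 : c ≠ 0 := Real.exp_ne_zero _
  have key : ∀ T' : Fin n → Fin n, IsSpanningTree ℓ i T' →
      treeWeight ℓ j (reverseTree T' i j) = c * treeWeight ℓ i T' := by
    intro T' hT'
    rw [treeWeight_reverseTree hT' hrev j, pathAction_invariance hT' hTt hrev hcc j]
  have hmem : ∀ T' : Fin n → Fin n, IsSpanningTree ℓ i T' ↔ T' ∈ Trees ℓ i := by
    intro T'
    rw [Trees, Finset.mem_filter]
    exact ⟨fun h => ⟨Finset.mem_univ _, h⟩, fun h => h.2⟩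
  have hmem' : ∀ U : Fin n → Fin n, IsSpanningTree ℓ j U ↔ U ∈ Trees ℓ j := by
    intro U
    rw [Trees, Finset.mem_filter]
    exact ⟨fun h => ⟨Finset.mem_univ _, h⟩, fun h => h.2⟩
  have hsum : ∑ T' ∈ Trees ℓ i, c * treeWeight ℓ i T' =
      ∑ U ∈ Trees ℓ j, treeWeight ℓ j U := by
    refine Finset.sum_bij' (fun T' _ => reverseTree T' i j)
      (fun U _ => reverseTree U j i) ?_ ?_ ?_ ?_ ?_
    · intro T' hT'
      exact (hmem' _).1 (reverseTree_isSpanningTree ((hmem _).2 hT') hrev j)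
    · intro U hU
      exact (hmem _).1 (reverseTree_isSpanningTree ((hmem' _).2 hU) hrev i)
    · intro T' hT'
      exact reverseTree_involution ((hmem _).2 hT') hrev j
    · intro U hU
      exact reverseTree_involution ((hmem' _).2 hU) hrev i
    · intro T' hT'
      exact (key T' ((hmem _).2 hT')).symm
  rw [key T hTt, ← hsum, ← Finset.mul_sum]
  exact mul_div_mul_left _ _ hc0
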